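/- arXiv:2007.10094 — 2 statements merged into one kernel-verified Lean document; each statement's English description precedes it below -/
import Mathlib

section
/- Let p be a prime, G a finite abelian p-group, and U a minimal zero-sum sequence over G of length D(G). Then supp(U) contains an element of order exp(G). -/
def IsMinZeroSum {G : Type*} [AddCommGroup G] (S : Multiset G) : Prop :=
  S ≠ 0 ∧ S.sum = 0 ∧ ∀ T : Multiset G, T ≤ S → T ≠ 0 → T ≠ S → T.sum ≠ 0

noncomputable def Dav (G : Type*) [AddCommGroup G] [Fintype G] : ℕ :=
  sSup {n : ℕ | ∃ S : Multiset G, IsMinZeroSum S ∧ Multiset.card S = n}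

/-- Any minimal zero-sum sequence has length at most `|G|`, via distinct partial sums. -/
lemma minZeroSum_card_le {G : Type*} [AddCommGroup G] [Fintype G] (S : Multiset G)
    (hS : IsMinZeroSum S) : Multiset.card S ≤ Fintype.card G := by
  obtain ⟨L, rfl⟩ := Quotient.exists_rep S
  show Multiset.card (L : Multiset G) ≤ Fintype.card G
  rw [Multiset.coe_card]
  have key : ∀ i j : Fin L.length, i.1 < j.1 →
      (L.take (i.1 + 1)).sum ≠ (L.take (j.1 + 1)).sum := by
    intro i j hlt hij
    set seg := (L.take (j.1 + 1)).drop (i.1 + 1) with hseg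
    have hsub : List.Sublist seg L :=
      (List.drop_sublist (i.1+1) (L.take (j.1+1))).trans (List.take_sublist (j.1+1) L)
    have hlen : seg.length = j.1 - i.1 := by
      simp only [hseg, List.length_drop, List.length_take]
      omega
    have hsum : seg.sum = 0 := by
      have h1 := List.sum_take_add_sum_drop (L.take (j.1+1)) (i.1+1)
      rw [List.take_take] at h1
      have hmin : min (i.1+1) (j.1+1) = i.1 + 1 := by omega
      rw [hmin, hij, ← hseg] at h1
      exact add_eq_left.mp h1
    have h2 : (seg : Multiset G) ≤ (L : Multiset G) := Multiset.coe_le.mpr hsub.subperm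
    have h3 : (seg : Multiset G) ≠ 0 := by
      rw [Ne, Multiset.coe_eq_zero, ← List.length_eq_zero_iff]
      omega
    have h4 : (seg : Multiset G) ≠ (L : Multiset G) := by
      intro h
      have := congrArg (Multiset.card) h
      rw [Multiset.coe_card, Multiset.coe_card, hlen] at this
      omega
    exact hS.2.2 (seg : Multiset G) h2 h3 h4 (by rwa [Multiset.sum_coe])
  have hinj : Function.Injective (fun i : Fin L.length => (L.take (i.1 + 1)).sum) := by
    intro i j hij
    simp only at hij
    by_contra hne
    have hne' : i.1 ≠ j.1 := fun h => hne (Fin.ext h)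
    rcases Nat.lt_or_ge i.1 j.1 with h | h
    · exact key i j h hij
    · exact key j i (by omega) hij.symm
  calc L.length = Fintype.card (Fin L.length) := (Fintype.card_fin _).symm
    _ ≤ Fintype.card G := Fintype.card_le_of_injective _ hinj

lemma davset_bddAbove (G : Type*) [AddCommGroup G] [Fintype G] :
    BddAbove {n : ℕ | ∃ S : Multiset G, IsMinZeroSum S ∧ Multiset.card S = n} := by
  refine ⟨Fintype.card G, fun n hn => ?_⟩
  obtain ⟨S, hS, rfl⟩ := hn
  exact minZeroSum_card_le S hS

theorem stmt_10 {G : Type*} [AddCommGroup G] [Fintype G] (p : ℕ) (hp : p.Prime)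
    (hpgroup : ∀ g : G, ∃ n : ℕ, p ^ n • g = 0)
    (U : Multiset G) (hU : IsMinZeroSum U) (hlen : Multiset.card U = Dav G) :
    ∃ g ∈ U, addOrderOf g = AddMonoid.exponent G := by
  classical
  by_contra hcon
  push_neg at hcon
  have hp2 : 2 ≤ p := hp.two_le
  obtain ⟨hU0, hUsum, hUmin⟩ := hU
  -- the exponent is a power of p
  set e := AddMonoid.exponent G with he
  set f : G → ℕ := fun g => (hpgroup g).choose with hf
  have hedvd : e ∣ p ^ (Finset.univ.sup f) := by
    rw [AddMonoid.exponent_dvd_iff_forall_nsmul_eq_zero]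
    intro g
    have h1 : p ^ (f g) • g = 0 := (hpgroup g).choose_spec
    have h2 : f g ≤ Finset.univ.sup f := Finset.le_sup (Finset.mem_univ g)
    calc p ^ (Finset.univ.sup f) • g
        = (p ^ (f g) * p ^ ((Finset.univ.sup f) - f g)) • g := by
          rw [← pow_add, Nat.add_sub_cancel' h2]
      _ = (p ^ ((Finset.univ.sup f) - f g)) • (p ^ (f g) • g) := mul_nsmul g _ _
      _ = 0 := by rw [h1, smul_zero]
  obtain ⟨k, hkle, hek⟩ := (Nat.dvd_prime_pow hp).mp hedvd
  -- every element of U is killed by p^(k-1), and k ≥ 1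
  obtain ⟨u, hu⟩ := Multiset.exists_mem_of_ne_zero hU0
  have horder : ∀ x ∈ U, p ^ (k - 1) • x = 0 := by
    intro x hx
    have h1 : addOrderOf x ∣ p ^ k := hek ▸ AddMonoid.addOrder_dvd_exponent x
    obtain ⟨j, hjk, hj⟩ := (Nat.dvd_prime_pow hp).mp h1
    have hjk' : j ≠ k := by
      intro h
      exact hcon x hx (by rw [hj, h, ← hek])
    rw [← addOrderOf_dvd_iff_nsmul_eq_zero, hj]
    exact pow_dvd_pow p (by omega)
  have hk1 : 1 ≤ k := by
    by_contra h
    have hk0 : k = 0 := by omega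
    have h1 : addOrderOf u ∣ p ^ k := hek ▸ AddMonoid.addOrder_dvd_exponent u
    rw [hk0, pow_zero, Nat.dvd_one] at h1
    exact hcon u hu (by rw [h1, hek, hk0, pow_zero])
  -- an element g of maximal order p^k
  obtain ⟨g, hg⟩ := AddMonoid.exists_addOrderOf_eq_exponent
    (AddMonoid.ExponentExists.of_finite (G := G))
  rw [← he, hek] at hg
  -- h = p^(k-1) • g has order exactly p
  set h : G := p ^ (k - 1) • g with hh
  have hpkg : p ^ k • g = 0 := by
    rw [← addOrderOf_dvd_iff_nsmul_eq_zero, hg]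
  have hmulp : p ^ (k - 1) * p = p ^ k := by
    conv_rhs => rw [show k = (k - 1) + 1 by omega]
    rw [pow_succ]
  have hph : p • h = 0 := by
    rw [hh, ← mul_nsmul, hmulp, hpkg]
  have hhne : h ≠ 0 := by
    intro h0
    have h1 : addOrderOf g ∣ p ^ (k - 1) := addOrderOf_dvd_iff_nsmul_eq_zero.mpr h0
    rw [hg] at h1
    have := Nat.le_of_dvd (pow_pos hp.pos _) h1
    have hlt : p ^ (k - 1) < p ^ k := Nat.pow_lt_pow_right hp.one_lt (by omega)
    omega
  have hordh : addOrderOf h = p := by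
    have h1 : addOrderOf h ∣ p := addOrderOf_dvd_iff_nsmul_eq_zero.mpr hph
    rcases (Nat.Prime.eq_one_or_self_of_dvd hp _ h1) with h2 | h2
    · exfalso
      apply hhne
      have := addOrderOf_nsmul_eq_zero h
      rwa [h2, one_nsmul] at this
    · exact h2
  -- the map φ
  set φ : G → G := fun x => p ^ (k - 1) • x with hφ
  have hφU : ∀ x ∈ U, φ x = 0 := horder
  -- the new sequence W
  set U' : Multiset G := U.erase u with hU'
  have hUu : u ::ₘ U' = U := Multiset.cons_erase hu
  set c : G := u + g - p • g with hc
  set A : Multiset G := c ::ₘ Multiset.replicate (p - 1) g with hA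
  set W : Multiset G := A + U' with hW
  have hgp1 : g + (p - 1) • g = p • g := by
    have : (p - 1) + 1 = p := by omega
    calc g + (p - 1) • g = (p - 1) • g + g := add_comm _ _
      _ = ((p - 1) + 1) • g := (succ_nsmul g (p - 1)).symm
      _ = p • g := by rw [this]
  have hsA : A.sum = u := by
    rw [hA, Multiset.sum_cons, Multiset.sum_replicate, hc]
    calc u + g - p • g + (p - 1) • g = u + (g + (p - 1) • g) - p • g := by abel
      _ = u + p • g - p • g := by rw [hgp1]
      _ = u := by abel
  have hcardA : Multiset.card A = p := by
    rw [hA, Multiset.card_cons, Multiset.card_replicate]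
    omega
  have hWsum : W.sum = 0 := by
    rw [hW, Multiset.sum_add, hsA, ← hUsum, ← hUu, Multiset.sum_cons]
  have hmulp' : p * p ^ (k - 1) = p ^ k := by rw [mul_comm]; exact hmulp
  have hφc : φ c = h := by
    show p ^ (k - 1) • (u + g - p • g) = h
    rw [nsmul_sub, nsmul_add, horder u hu, ← mul_nsmul, hmulp', hpkg, hh]
    abel
  have hφg : φ g = h := rfl
  have hφW : ∀ x ∈ W, φ x = h ∨ φ x = 0 := by
    intro x hx
    rw [hW, Multiset.mem_add] at hx
    rcases hx with hx | hx
    · rw [hA, Multiset.mem_cons] at hx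
      rcases hx with rfl | hx
      · exact Or.inl hφc
      · rw [Multiset.eq_of_mem_replicate hx]
        exact Or.inl hφg
    · exact Or.inr (hφU x (Multiset.mem_of_mem_erase hx))
  -- W is a minimal zero-sum sequence
  have hWfilter : W.filter (fun x => φ x = h) = A := by
    rw [hW, Multiset.filter_add]
    have h1 : U'.filter (fun x => φ x = h) = 0 := by
      rw [Multiset.filter_eq_nil]
      intro x hx
      rw [hφU x (Multiset.mem_of_mem_erase hx)]
      exact fun hh0 => hhne hh0.symm
    have h2 : A.filter (fun x => φ x = h) = A := by
      rw [Multiset.filter_eq_self]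
      intro x hx
      rw [hA, Multiset.mem_cons] at hx
      rcases hx with rfl | hx
      · exact hφc
      · rw [Multiset.eq_of_mem_replicate hx]
    rw [h1, h2, add_zero]
  have hWmin : IsMinZeroSum W := by
    refine ⟨?_, hWsum, ?_⟩
    · rw [hW, hA]
      simp [Multiset.cons_add]
    intro T hTW hT0 hTWne hTsum
    -- count of elements mapping to h
    set nh : ℕ := Multiset.card (T.filter (fun x => φ x = h)) with hnh
    have hmapsum : (T.map φ).sum = nh • h := by
      have hsplit : T.filter (fun x => φ x = h) + T.filter (fun x => ¬ φ x = h) = T :=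
        Multiset.filter_add_not _ T
      have e1 : (T.filter (fun x => φ x = h)).map φ = Multiset.replicate nh h := by
        rw [Multiset.eq_replicate]
        constructor
        · rw [Multiset.card_map]
        · intro b hb
          obtain ⟨a, ha, rfl⟩ := Multiset.mem_map.mp hb
          have h5 := Multiset.of_mem_filter ha
          exact h5
      have e2 : (T.filter (fun x => ¬ φ x = h)).map φ
          = Multiset.replicate (Multiset.card (T.filter (fun x => ¬ φ x = h))) 0 := by
        rw [Multiset.eq_replicate]
        refine ⟨by rw [Multiset.card_map], ?_⟩
        intro b hb
        obtain ⟨a, ha, rfl⟩ := Multiset.mem_map.mp hb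
        have haW : a ∈ W := Multiset.mem_of_le hTW (Multiset.mem_of_mem_filter ha)
        rcases hφW a haW with h1 | h1
        · have h6 := Multiset.of_mem_filter ha
          exact absurd h1 h6
        · exact h1
      calc (T.map φ).sum
          = ((T.filter (fun x => φ x = h)).map φ).sum
            + ((T.filter (fun x => ¬ φ x = h)).map φ).sum := by
            rw [← Multiset.sum_add, ← Multiset.map_add, hsplit]
        _ = nh • h + 0 := by
            rw [e1, e2, Multiset.sum_replicate, Multiset.sum_replicate, smul_zero]
        _ = nh • h := add_zero _
    have hmapsum0 : (T.map φ).sum = 0 := by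
      have : (T.map φ).sum = p ^ (k - 1) • T.sum := by
        rw [hφ]
        have := Multiset.sum_map_nsmul (m := T) (f := id) (n := p ^ (k - 1))
        simpa using this
      rw [this, hTsum, smul_zero]
    have hpnh : p ∣ nh := by
      rw [← hordh]
      rw [addOrderOf_dvd_iff_nsmul_eq_zero, ← hmapsum, hmapsum0]
    have hnhle : nh ≤ p := by
      have h1 : T.filter (fun x => φ x = h) ≤ W.filter (fun x => φ x = h) :=
        Multiset.filter_le_filter _ hTW
      have := Multiset.card_le_card h1
      rwa [hWfilter, hcardA] at this
    rcases Nat.eq_zero_or_pos nh with hnh0 | hnhpos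
    · -- nh = 0 : T lies inside U', contradicting minimality of U
      have hTU' : T ≤ U' := by
        rw [Multiset.le_iff_count]
        intro x
        by_cases hxT : x ∈ T
        · have hxW : x ∈ W := Multiset.mem_of_le hTW hxT
          have hφx : φ x = 0 := by
            rcases hφW x hxW with h1 | h1
            · exfalso
              have : x ∈ T.filter (fun x => φ x = h) := Multiset.mem_filter.mpr ⟨hxT, h1⟩
              have hcard : 0 < nh := by
                rw [hnh]
                exact Multiset.card_pos.mpr (fun hz => by simp [hz] at this)
              omega
            · exact h1
          have hxA : x ∉ A := by
            intro hxA
            rw [hA, Multiset.mem_cons] at hxA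
            rcases hxA with rfl | hxA
            · exact hhne (hφc ▸ hφx ▸ rfl)
            · rw [Multiset.eq_of_mem_replicate hxA] at hφx
              exact hhne (hφg ▸ hφx ▸ rfl)
          have := Multiset.le_iff_count.mp hTW x
          rwa [hW, Multiset.count_add, Multiset.count_eq_zero_of_notMem hxA, zero_add] at this
        · rw [Multiset.count_eq_zero_of_notMem hxT]
          exact Nat.zero_le _
      have hTU : T ≤ U := hTU'.trans (Multiset.erase_le u U)
      have hTneU : T ≠ U := by
        intro hTeq
        have h1 := Multiset.card_le_card hTU'
        rw [hTeq, hU', Multiset.card_erase_of_mem hu, Nat.pred_eq_sub_one] at h1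
        have h3 : 0 < Multiset.card U := Multiset.card_pos.mpr hU0
        omega
      exact hUmin T hTU hT0 hTneU hTsum
    · -- nh = p : A ≤ T and the rest of T together with u is a zero-sum subsequence of U
      have hnhp : nh = p := le_antisymm hnhle (Nat.le_of_dvd hnhpos hpnh)
      have hfeq : T.filter (fun x => φ x = h) = A := by
        have h1 : T.filter (fun x => φ x = h) ≤ W.filter (fun x => φ x = h) :=
          Multiset.filter_le_filter _ hTW
        rw [hWfilter] at h1
        exact Multiset.eq_of_le_of_card_le h1 (le_of_eq (by rw [hcardA, ← hnh, hnhp]))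
      have hAT : A ≤ T := hfeq ▸ Multiset.filter_le _ T
      set Sr : Multiset G := T - A with hSr
      have hTS : A + Sr = T := by
        rw [hSr, add_tsub_cancel_of_le hAT]
      have hSrU' : Sr ≤ U' := by
        rw [hSr, tsub_le_iff_left]
        rw [hW] at hTW
        exact hTW
      have hsumS : (u ::ₘ Sr).sum = 0 := by
        rw [Multiset.sum_cons]
        have h1 : A.sum + Sr.sum = 0 := by rw [← Multiset.sum_add, hTS, hTsum]
        rw [hsA] at h1
        exact h1
      have hle : u ::ₘ Sr ≤ U := by
        rw [← hUu]
        exact Multiset.cons_le_cons u hSrU'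
      have hne0 : u ::ₘ Sr ≠ 0 := Multiset.cons_ne_zero
      have heqU : u ::ₘ Sr = U := by
        by_contra hne
        exact hUmin _ hle hne0 hne hsumS
      have hSrU : Sr = U' := by
        rw [← hUu] at heqU
        exact (Multiset.cons_inj_right u).mp heqU
      apply hTWne
      rw [← hTS, hSrU, hW]
  -- contradiction with maximality of |U|
  have hmem : Multiset.card W ∈
      {n : ℕ | ∃ S : Multiset G, IsMinZeroSum S ∧ Multiset.card S = n} :=
    ⟨W, hWmin, rfl⟩
  have hle := le_csSup (davset_bddAbove G) hmem
  rw [← Dav] at hle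
  rw [← hlen] at hle
  have hcardW : Multiset.card W = p + (Multiset.card U - 1) := by
    rw [hW, Multiset.card_add, hcardA, hU', Multiset.card_erase_of_mem hu, Nat.pred_eq_sub_one]
  have hUpos : 0 < Multiset.card U := Multiset.card_pos.mpr hU0
  rw [hcardW] at hle
  have := hp.two_le
  omega
end

section
/- Let G be a finite abelian group with exponent n = exp(G) and suppose G is a direct sum G = G_1 ⊕ ⟨h⟩ with ord(h) = n, G_1 ≅ C_2^s. Let g ∈ G with g ∉ ⟨h⟩ and 2g ∈ ⟨h⟩ and ord(g) = n = 2p (p an odd prime). Then there exists k ∈ [1, 2p−1] such that g²h^k and (−g)²h^{2p−k} are minimal zero-sum sequences, and the product (g²h^k)((−g)²h^{2p−k}) = (g(−g))² h^{2p} exhibits an element of B({g, −g, h, −h}) with factorization lengths 2 and 3, whence min Δ({g, −g, h}) = 1. -/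
/-- The set of factorization lengths of a zero-sum sequence `A` into minimal
zero-sum sequences with all terms in `G₀`. -/
def LengthsOf {G : Type*} [AddCommGroup G] (G₀ : Set G) (A : Multiset G) : Set ℕ :=
  {k | ∃ fac : Multiset (Multiset G), Multiset.card fac = k ∧
        (∀ V ∈ fac, IsMinZeroSum V ∧ ∀ x ∈ V, x ∈ G₀) ∧ fac.sum = A}

/-- The set of (successive) distances of the monoid of zero-sum sequences over `G₀`. -/
def DeltaSet {G : Type*} [AddCommGroup G] (G₀ : Set G) : Set ℕ :=
  {d | 0 < d ∧ ∃ (A : Multiset G) (k : ℕ), k ∈ LengthsOf G₀ A ∧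
        k + d ∈ LengthsOf G₀ A ∧ ∀ j, k < j → j < k + d → j ∉ LengthsOf G₀ A}

lemma repl_min {G : Type*} [AddCommGroup G] (h : G) (n : ℕ) (hn : addOrderOf h = n)
    (hn0 : 0 < n) : IsMinZeroSum (Multiset.replicate n h) := by
  refine ⟨by intro he; have := congrArg Multiset.card he; simp at this; omega, by
    rw [Multiset.sum_replicate, ← hn]; exact addOrderOf_nsmul_eq_zero h, ?_⟩
  intro T hT hT0 hTS hsum
  have hTe : T = Multiset.replicate (Multiset.card T) h :=
    Multiset.eq_replicate_card.mpr fun x hx => Multiset.eq_of_mem_replicate (Multiset.mem_of_le hT hx)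
  have hcard : Multiset.card T ≤ n := by
    simpa using Multiset.card_le_card hT
  have h1 : 1 ≤ Multiset.card T := by
    rcases Nat.eq_zero_or_pos (Multiset.card T) with h0 | h0
    · exact absurd (Multiset.card_eq_zero.mp h0) hT0
    · omega
  have hne : Multiset.card T ≠ n := fun he => hTS (by rw [hTe, he])
  rw [hTe, Multiset.sum_replicate] at hsum
  have := addOrderOf_dvd_of_nsmul_eq_zero hsum
  rw [hn] at this
  have := Nat.le_of_dvd (by omega) this
  omega

lemma sub_two_repl {G : Type*} [AddCommGroup G] [DecidableEq G] {g h : G} (hne : g ≠ h)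
    {m k : ℕ} {T : Multiset G} (hT : T ≤ Multiset.replicate m g + Multiset.replicate k h) :
    T = Multiset.replicate (T.count g) g + Multiset.replicate (T.count h) h ∧
      T.count g ≤ m ∧ T.count h ≤ k := by
  have hc : ∀ x, T.count x ≤ (Multiset.replicate m g + Multiset.replicate k h).count x :=
    fun x => Multiset.count_le_of_le x hT
  refine ⟨?_, ?_, ?_⟩
  · ext x
    have hx := hc x
    simp only [Multiset.count_add, Multiset.count_replicate] at hx ⊢
    by_cases h1 : g = x
    · subst h1; rw [if_pos rfl, if_neg (Ne.symm hne), add_zero]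
    · by_cases h2 : h = x
      · subst h2; rw [if_neg h1, if_pos rfl, zero_add]
      · rw [if_neg h1, if_neg h2] at hx ⊢; omega
  · have hx := hc g
    simp only [Multiset.count_add, Multiset.count_replicate, if_pos rfl,
      if_neg (Ne.symm hne), add_zero, if_true, eq_self_iff_true] at hx
    simpa using hx
  · have hx := hc h
    simp only [Multiset.count_add, Multiset.count_replicate, if_neg hne, if_pos rfl,
      zero_add, if_true, eq_self_iff_true] at hx
    simpa using hx

lemma min_gh {G : Type*} [AddCommGroup G] (g h : G) (n k : ℕ) (hn : addOrderOf h = n)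
    (hk1 : 1 ≤ k) (hk2 : k < n) (hgzh : g ∉ AddSubgroup.zmultiples h)
    (hsum : 2 • g + k • h = 0) :
    IsMinZeroSum (Multiset.replicate 2 g + Multiset.replicate k h) := by
  classical
  have hg0 : g ≠ 0 := fun he => hgzh (he ▸ (AddSubgroup.zmultiples h).zero_mem)
  have hne : g ≠ h := fun he => hgzh (he ▸ AddSubgroup.mem_zmultiples h)
  have hgh : ∀ b : ℕ, g + b • h ≠ 0 := by
    intro b hb
    exact hgzh ⟨-(b : ℤ), by show (-(b : ℤ)) • h = g; rw [neg_smul, natCast_zsmul, ← neg_eq_of_add_eq_zero_right hb, neg_neg]⟩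
  refine ⟨by simp, by rw [Multiset.sum_add, Multiset.sum_replicate, Multiset.sum_replicate]; exact hsum, ?_⟩
  intro T hT hT0 hTS hs
  obtain ⟨hTe, hcg, hch⟩ := sub_two_repl hne hT
  set a := T.count g with ha
  set b := T.count h with hb
  rw [hTe, Multiset.sum_add, Multiset.sum_replicate, Multiset.sum_replicate] at hs
  have hnot0 : ¬(a = 0 ∧ b = 0) := by
    rintro ⟨h1, h2⟩
    exact hT0 (by rw [hTe, h1, h2]; simp)
  have hnotS : ¬(a = 2 ∧ b = k) := by
    rintro ⟨h1, h2⟩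
    exact hTS (by rw [hTe, h1, h2])
  interval_cases a
  · -- a = 0 : b • h = 0 with 1 ≤ b < n
    simp only [zero_smul, zero_add] at hs
    have := addOrderOf_dvd_of_nsmul_eq_zero hs
    rw [hn] at this
    have := Nat.le_of_dvd (by omega) this
    omega
  · -- a = 1
    rw [one_smul] at hs
    exact hgh b hs
  · -- a = 2 : b < k
    have hblt : b < k := by omega
    have : (k - b) • h = 0 := by
      have : (k - b) • h + (2 • g + b • h) = 2 • g + k • h := by
        rw [← hsum] at *
        have : (k - b) • h + b • h = k • h := by
          rw [← add_nsmul]; congr 1; omega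
        rw [hsum]
        calc (k-b) • h + (2 • g + b • h) = 2 • g + ((k-b) • h + b • h) := by abel
          _ = 2 • g + k • h := by rw [this]
      rw [hs, hsum, add_zero] at this
      exact this
    have := addOrderOf_dvd_of_nsmul_eq_zero this
    rw [hn] at this
    have := Nat.le_of_dvd (by omega) this
    omega

lemma pair_min {G : Type*} [AddCommGroup G] (g : G) (hg : g ≠ 0) :
    IsMinZeroSum ({g, -g} : Multiset G) := by
  refine ⟨by simp, by simp, ?_⟩
  intro T hT hT0 hTS hs
  have hcard : Multiset.card T ≤ 2 := by simpa using Multiset.card_le_card hT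
  have h1 : 1 ≤ Multiset.card T := by
    rcases Nat.eq_zero_or_pos (Multiset.card T) with h0 | h0
    · exact absurd (Multiset.card_eq_zero.mp h0) hT0
    · omega
  interval_cases hc : Multiset.card T
  · obtain ⟨x, hx⟩ := Multiset.card_eq_one.mp hc
    have hxm : x ∈ ({g, -g} : Multiset G) := Multiset.mem_of_le hT (by rw [hx]; simp)
    rw [hx, Multiset.sum_singleton] at hs
    rcases (by simpa using hxm) with h | h <;> subst h <;> simp_all
  · exact hTS (Multiset.eq_of_le_of_card_le hT (by simp [hc]))

theorem stmt_15 {G : Type*} [AddCommGroup G] [Fintype G] (p : ℕ) (hp : p.Prime)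
    (hodd : Odd p) (hexp : AddMonoid.exponent G = 2 * p)
    (G₁ : AddSubgroup G) (h : G)
    (hordh : addOrderOf h = 2 * p)
    (hcompl : IsCompl G₁ (AddSubgroup.zmultiples h))
    (helem : ∀ x ∈ G₁, 2 • x = 0)
    (g : G) (hg : g ∉ AddSubgroup.zmultiples h)
    (h2g : 2 • g ∈ AddSubgroup.zmultiples h)
    (hordg : addOrderOf g = 2 * p) :
    ∃ k : ℕ, 1 ≤ k ∧ k ≤ 2 * p - 1 ∧
      IsMinZeroSum (Multiset.replicate 2 g + Multiset.replicate k h) ∧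
      IsMinZeroSum (Multiset.replicate 2 (-g) + Multiset.replicate (2 * p - k) h) ∧
      (Multiset.replicate 2 g + Multiset.replicate k h) +
          (Multiset.replicate 2 (-g) + Multiset.replicate (2 * p - k) h)
        = (Multiset.replicate 2 g + Multiset.replicate 2 (-g)) +
            Multiset.replicate (2 * p) h ∧
      (∃ A : Multiset G, 2 ∈ LengthsOf ({g, -g, h} : Set G) A ∧
        3 ∈ LengthsOf ({g, -g, h} : Set G) A) ∧
      sInf (DeltaSet ({g, -g, h} : Set G)) = 1 := by
  classical
  have hp2 : 2 ≤ p := hp.two_le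
  obtain ⟨c, hc⟩ := AddSubgroup.mem_zmultiples_iff.mp h2g
  have hc' : c • h = 2 • g := hc
  set k : ℕ := ((-c) % (2 * (p : ℤ))).toNat with hkdef
  have hnz : (2 * (p : ℤ)) ≠ 0 := by positivity
  have hkz : (k : ℤ) = (-c) % (2 * (p : ℤ)) :=
    Int.toNat_of_nonneg (Int.emod_nonneg _ hnz)
  have hklt : k < 2 * p := by
    have := Int.emod_lt_of_pos (-c) (show (0:ℤ) < 2 * p by positivity)
    rw [← hkz] at this
    exact_mod_cast this
  have hzn : (2 * (p : ℤ)) • h = 0 := by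
    have h0 : ((2 * p : ℕ) : ℤ) • h = 0 := by
      rw [natCast_zsmul, ← hordh]; exact addOrderOf_nsmul_eq_zero h
    push_cast at h0; exact h0
  have hkh : k • h = -(2 • g) := by
    have h1 : (k : ℤ) • h = (-c) • h := by
      rw [hkz]
      conv_rhs => rw [← Int.emod_add_mul_ediv (-c) (2 * (p : ℤ))]
      rw [add_smul, mul_comm (2 * (p:ℤ)), mul_smul, hzn, smul_zero, add_zero]
    rw [← natCast_zsmul, h1, neg_smul, hc']
  have hg0 : g ≠ 0 := by
    intro he
    rw [he, addOrderOf_zero] at hordg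
    omega
  have h2g0 : 2 • g ≠ 0 := by
    intro he
    have := addOrderOf_dvd_of_nsmul_eq_zero he
    rw [hordg] at this
    have := Nat.le_of_dvd (by norm_num) this
    omega
  have hk1 : 1 ≤ k := by
    rcases Nat.eq_zero_or_pos k with h0 | h0
    · rw [h0, zero_smul] at hkh
      exact absurd (by rw [← neg_neg (2 • g), ← hkh, neg_zero]) h2g0
    · omega
  have hsum1 : 2 • g + k • h = 0 := by rw [hkh]; simp
  have hsum2 : 2 • (-g) + (2 * p - k) • h = 0 := by
    have e1 : (2 * p - k) • h + k • h = 0 := by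
      rw [← add_nsmul, show 2 * p - k + k = 2 * p by omega, ← hordh]
      exact addOrderOf_nsmul_eq_zero h
    have e2 : (2 * p - k) • h = 2 • g := by
      rw [eq_neg_of_add_eq_zero_left e1, hkh, neg_neg]
    rw [e2, smul_neg]
    simp
  have hneg : -g ∉ AddSubgroup.zmultiples h := fun hm => hg (by simpa using neg_mem hm)
  have minU := min_gh g h (2 * p) k hordh hk1 hklt hg hsum1
  have minV := min_gh (-g) h (2 * p) (2 * p - k) hordh (by omega) (by omega) hneg hsum2
  have hAdd : (Multiset.replicate 2 g + Multiset.replicate k h) +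
          (Multiset.replicate 2 (-g) + Multiset.replicate (2 * p - k) h)
        = (Multiset.replicate 2 g + Multiset.replicate 2 (-g)) +
            Multiset.replicate (2 * p) h := by
    rw [add_add_add_comm, ← Multiset.replicate_add]
    congr 2
    omega
  set U := Multiset.replicate 2 g + Multiset.replicate k h with hU
  set V := Multiset.replicate 2 (-g) + Multiset.replicate (2 * p - k) h with hV
  set A := (Multiset.replicate 2 g + Multiset.replicate 2 (-g)) + Multiset.replicate (2 * p) h with hA
  have memU : ∀ x ∈ U, x ∈ ({g, -g, h} : Set G) := by
    intro x hx
    rw [hU, Multiset.mem_add] at hx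
    rcases hx with hx | hx <;> rw [Multiset.eq_of_mem_replicate hx] <;> simp
  have memV : ∀ x ∈ V, x ∈ ({g, -g, h} : Set G) := by
    intro x hx
    rw [hV, Multiset.mem_add] at hx
    rcases hx with hx | hx <;> rw [Multiset.eq_of_mem_replicate hx] <;> simp
  have hlen2 : 2 ∈ LengthsOf ({g, -g, h} : Set G) A := by
    refine ⟨{U, V}, by simp, ?_, by simp [hAdd]⟩
    intro W hW
    rcases (by simpa using hW : W = U ∨ W = V) with rfl | rfl
    · exact ⟨minU, memU⟩
    · exact ⟨minV, memV⟩
  have hpp : ({g, -g} : Multiset G) + {g, -g} = Multiset.replicate 2 g + Multiset.replicate 2 (-g) := by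
    ext x
    by_cases h1 : g = x <;> by_cases h2 : -g = x <;>
      simp [Multiset.count_replicate, Multiset.count_cons, Multiset.count_singleton, h1, h2,
        eq_comm] <;> ring
  have hlen3 : 3 ∈ LengthsOf ({g, -g, h} : Set G) A := by
    refine ⟨{({g, -g} : Multiset G), ({g, -g} : Multiset G), Multiset.replicate (2 * p) h},
      by simp, ?_, ?_⟩
    · intro W hW
      rcases (by simpa using hW : W = ({g, -g} : Multiset G) ∨ W = ({g, -g} : Multiset G)
          ∨ W = Multiset.replicate (2 * p) h) with rfl | rfl | rfl
      · exact ⟨pair_min g hg0, by intro x hx; rcases (by simpa using hx : x = g ∨ x = -g) with rfl | rfl <;> simp⟩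
      · exact ⟨pair_min g hg0, by intro x hx; rcases (by simpa using hx : x = g ∨ x = -g) with rfl | rfl <;> simp⟩
      · exact ⟨repl_min h (2 * p) hordh (by omega),
          by intro x hx; rw [Multiset.eq_of_mem_replicate hx]; simp⟩
    · rw [hA]
      simp only [Multiset.insert_eq_cons, Multiset.sum_cons, Multiset.sum_singleton] at hpp ⊢
      rw [← add_assoc, hpp]
  have h1mem : 1 ∈ DeltaSet ({g, -g, h} : Set G) := by
    refine ⟨one_pos, A, 2, hlen2, by norm_num; exact hlen3, ?_⟩
    intro j hj1 hj2 _
    omega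
  refine ⟨k, hk1, by omega, minU, minV, hAdd, ⟨A, hlen2, hlen3⟩, ?_⟩
  have hmem := Nat.sInf_mem (⟨1, h1mem⟩ : (DeltaSet ({g, -g, h} : Set G)).Nonempty)
  have hle := Nat.sInf_le h1mem
  have hpos := hmem.1
  omega
end
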